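/- Let B be a C*-algebra and X a closed subspace of B such that X X* X ⊆ X (closed linear spans of products). Set C = closure of span(XX*) and D = closure of span(X*X). Then C and D are C*-subalgebras of B, and X is a C–D imprimitivity bimodule with module actions given by multiplication in B and inner products ⟨x,y⟩_C = xy* and ⟨x,y⟩_D = x*y. -/
import Mathlib

section Helpers

variable {B : Type*} [NormedRing B] [StarRing B] [CStarRing B] [NormedAlgebra ℂ B]
    [CompleteSpace B] [StarModule ℂ B]

/-- If a submodule is closed under multiplication, so is the closure. -/
lemma aux_closure_mul {M : Submodule ℂ B}
    (h : ∀ a ∈ M, ∀ b ∈ M, a * b ∈ M) :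
    ∀ a ∈ closure (M : Set B), ∀ b ∈ closure (M : Set B), a * b ∈ closure (M : Set B) := by
  intro a ha b hb
  have step : ∀ y ∈ (M : Set B), a * y ∈ closure (M : Set B) := by
    intro y hy
    exact map_mem_closure (f := fun z => z * y) (continuous_mul_right y) ha (fun z hz => h z hz y hy)
  have := map_mem_closure (continuous_mul_left a) hb step
  simpa using this
/-- If a submodule is closed under star, so is its closure. -/
lemma aux_closure_star {M : Submodule ℂ B}
    (h : ∀ a ∈ M, star a ∈ M) :
    ∀ a ∈ closure (M : Set B), star a ∈ closure (M : Set B) := by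
  intro a ha
  exact map_mem_closure continuous_star ha h

/-- If a submodule multiplies a closed submodule into it on the right, so does its closure. -/
lemma aux_closure_act_left {M X : Submodule ℂ B} (hXc : IsClosed (X : Set B))
    (h : ∀ a ∈ M, ∀ x ∈ X, a * x ∈ X) :
    ∀ a ∈ closure (M : Set B), ∀ x ∈ X, a * x ∈ X := by
  intro a ha x hx
  have := map_mem_closure (continuous_mul_right x) ha (fun z hz => h z hz x hx)
  rwa [hXc.closure_eq] at this

lemma aux_closure_act_right {M X : Submodule ℂ B} (hXc : IsClosed (X : Set B))
    (h : ∀ a ∈ M, ∀ x ∈ X, x * a ∈ X) :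
    ∀ x ∈ X, ∀ a ∈ closure (M : Set B), x * a ∈ X := by
  intro x hx a ha
  have := map_mem_closure (continuous_mul_left x) ha (fun z hz => h z hz x hx)
  rwa [hXc.closure_eq] at this

lemma aux_span_mul {S : Set B}
    (h : ∀ a ∈ S, ∀ b ∈ S, a * b ∈ Submodule.span ℂ S) :
    ∀ a ∈ Submodule.span ℂ S, ∀ b ∈ Submodule.span ℂ S, a * b ∈ Submodule.span ℂ S := by
  intro a ha b hb
  have key : Submodule.span ℂ S * Submodule.span ℂ S ≤ Submodule.span ℂ S := by
    rw [Submodule.span_mul_span]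
    rw [Submodule.span_le]
    rintro w ⟨u, hu, v, hv, rfl⟩
    exact h u hu v hv
  exact key (Submodule.mul_mem_mul ha hb)

lemma aux_span_star {S : Set B} (h : ∀ a ∈ S, star a ∈ Submodule.span ℂ S) :
    ∀ a ∈ Submodule.span ℂ S, star a ∈ Submodule.span ℂ S := by
  intro a ha
  induction ha using Submodule.span_induction with
  | mem x hx => exact h x hx
  | zero => simpa using Submodule.zero_mem _
  | add x y _ _ hx hy => rw [star_add]; exact Submodule.add_mem _ hx hy
  | smul r x _ hx => rw [star_smul]; exact Submodule.smul_mem _ _ hx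

lemma aux_span_act {S : Set B} {X : Submodule ℂ B}
    (h : ∀ a ∈ S, ∀ x ∈ X, a * x ∈ X) :
    ∀ a ∈ Submodule.span ℂ S, ∀ x ∈ X, a * x ∈ X := by
  intro a ha x hx
  induction ha using Submodule.span_induction with
  | mem y hy => exact h y hy x hx
  | zero => simpa using X.zero_mem
  | add y z _ _ hy hz => rw [add_mul]; exact X.add_mem hy hz
  | smul r y _ hy => rw [smul_mul_assoc]; exact X.smul_mem _ hy

lemma aux_span_act' {S : Set B} {X : Submodule ℂ B}
    (h : ∀ a ∈ S, ∀ x ∈ X, x * a ∈ X) :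
    ∀ a ∈ Submodule.span ℂ S, ∀ x ∈ X, x * a ∈ X := by
  intro a ha x hx
  induction ha using Submodule.span_induction with
  | mem y hy => exact h y hy x hx
  | zero => simpa using X.zero_mem
  | add y z _ _ hy hz => rw [mul_add]; exact X.add_mem hy hz
  | smul r y _ hy => rw [mul_smul_comm]; exact X.smul_mem _ hy

end Helpers


/-- Let `B` be a C*-algebra and `X` a closed subspace with `X X* X ⊆ X`.  With
`C = closed span (X X*)` and `D = closed span (X* X)`, `C` and `D` are C*-subalgebras of
`B` and `X` is a `C`–`D` imprimitivity bimodule: `C` and `D` are closed under products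
and adjoints, `X` is invariant under left multiplication by `C` and right multiplication
by `D`, the inner products `⟨x,y⟩_C = x y*` and `⟨x,y⟩_D = x* y` take values in `C` and
`D` respectively, and satisfy the compatibility `⟨x,y⟩_C · z = x · ⟨y,z⟩_D`. -/
theorem stmt_15 {B : Type*} [NormedRing B] [StarRing B] [CStarRing B] [NormedAlgebra ℂ B]
    [CompleteSpace B] [StarModule ℂ B]
    (X : Submodule ℂ B) (hXc : IsClosed (X : Set B))
    (hXXX : ∀ x ∈ X, ∀ y ∈ X, ∀ z ∈ X, x * star y * z ∈ X) :
    (∀ c ∈ closure (Submodule.span ℂ {w : B | ∃ x ∈ X, ∃ y ∈ X, w = x * star y} : Set B),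
      ∀ c' ∈ closure (Submodule.span ℂ {w : B | ∃ x ∈ X, ∃ y ∈ X, w = x * star y} : Set B),
        c * c' ∈ closure (Submodule.span ℂ {w : B | ∃ x ∈ X, ∃ y ∈ X, w = x * star y} : Set B)) ∧
    (∀ c ∈ closure (Submodule.span ℂ {w : B | ∃ x ∈ X, ∃ y ∈ X, w = x * star y} : Set B),
      star c ∈ closure (Submodule.span ℂ {w : B | ∃ x ∈ X, ∃ y ∈ X, w = x * star y} : Set B)) ∧
    (∀ d ∈ closure (Submodule.span ℂ {w : B | ∃ x ∈ X, ∃ y ∈ X, w = star x * y} : Set B),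
      ∀ d' ∈ closure (Submodule.span ℂ {w : B | ∃ x ∈ X, ∃ y ∈ X, w = star x * y} : Set B),
        d * d' ∈ closure (Submodule.span ℂ {w : B | ∃ x ∈ X, ∃ y ∈ X, w = star x * y} : Set B)) ∧
    (∀ d ∈ closure (Submodule.span ℂ {w : B | ∃ x ∈ X, ∃ y ∈ X, w = star x * y} : Set B),
      star d ∈ closure (Submodule.span ℂ {w : B | ∃ x ∈ X, ∃ y ∈ X, w = star x * y} : Set B)) ∧
    (∀ c ∈ closure (Submodule.span ℂ {w : B | ∃ x ∈ X, ∃ y ∈ X, w = x * star y} : Set B),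
      ∀ x ∈ X, c * x ∈ X) ∧
    (∀ x ∈ X, ∀ d ∈ closure (Submodule.span ℂ {w : B | ∃ x ∈ X, ∃ y ∈ X, w = star x * y} : Set B),
      x * d ∈ X) ∧
    (∀ x ∈ X, ∀ y ∈ X,
      x * star y ∈ closure (Submodule.span ℂ {w : B | ∃ x ∈ X, ∃ y ∈ X, w = x * star y} : Set B)) ∧
    (∀ x ∈ X, ∀ y ∈ X,
      star x * y ∈ closure (Submodule.span ℂ {w : B | ∃ x ∈ X, ∃ y ∈ X, w = star x * y} : Set B)) ∧
    (∀ x ∈ X, ∀ y ∈ X, ∀ z ∈ X, (x * star y) * z = x * (star y * z)) := by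
  refine ⟨?_, ?_, ?_, ?_, ?_, ?_, ?_, ?_, fun x _ y _ z _ => mul_assoc x (star y) z⟩
  · refine aux_closure_mul (aux_span_mul ?_)
    rintro a ⟨x, hx, y, hy, rfl⟩ b ⟨z, hz, w, hw, rfl⟩
    refine Submodule.subset_span ⟨x * star y * z, hXXX x hx y hy z hz, w, hw, ?_⟩
    simp [mul_assoc]
  · refine aux_closure_star (aux_span_star ?_)
    rintro a ⟨x, hx, y, hy, rfl⟩
    exact Submodule.subset_span ⟨y, hy, x, hx, by simp [star_mul]⟩
  · refine aux_closure_mul (aux_span_mul ?_)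
    rintro a ⟨x, hx, y, hy, rfl⟩ b ⟨z, hz, w, hw, rfl⟩
    refine Submodule.subset_span ⟨z * star y * x, hXXX z hz y hy x hx, w, hw, ?_⟩
    simp [star_mul, mul_assoc]
  · refine aux_closure_star (aux_span_star ?_)
    rintro a ⟨x, hx, y, hy, rfl⟩
    exact Submodule.subset_span ⟨y, hy, x, hx, by simp [star_mul]⟩
  · refine aux_closure_act_left hXc (aux_span_act ?_)
    rintro a ⟨x, hx, y, hy, rfl⟩ z hz
    exact hXXX x hx y hy z hz
  · refine aux_closure_act_right hXc (aux_span_act' ?_)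
    rintro a ⟨x, hx, y, hy, rfl⟩ z hz
    rw [← mul_assoc]
    exact hXXX z hz x hx y hy
  · intro x hx y hy
    exact subset_closure (Submodule.subset_span ⟨x, hx, y, hy, rfl⟩)
  · intro x hx y hy
    exact subset_closure (Submodule.subset_span ⟨x, hx, y, hy, rfl⟩)
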